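/- Heisenberg dilations map solutions to solutions after a quadratic time rescaling: if c : I → ℝ⁶ is a solution of the Kepler-Heisenberg system and λ > 0, then the curve c_λ defined by c_λ(t) = D_λ(c(t/λ²)) (on the correspondingly rescaled interval) is also a solution of the Kepler-Heisenberg system. -/

import Mathlib

/-- `P_X = p_x - (1/2) y p_z`, where phase space coordinates are
`(x, y, z, p_x, p_y, p_z) = (p 0, p 1, p 2, p 3, p 4, p 5)`. -/
noncomputable def PX (p : Fin 6 → ℝ) : ℝ := p 3 - (1/2) * p 1 * p 5

/-- `P_Y = p_y + (1/2) x p_z`. -/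
noncomputable def PY (p : Fin 6 → ℝ) : ℝ := p 4 + (1/2) * p 0 * p 5

/-- `Q = (x² + y²)² + 16 z²`. -/
noncomputable def Qf (p : Fin 6 → ℝ) : ℝ := ((p 0)^2 + (p 1)^2)^2 + 16 * (p 2)^2

/-- The Kepler–Heisenberg Hamiltonian `H = (1/2)(P_X² + P_Y²) - (1/(8π)) Q^{-1/2}`. -/
noncomputable def Ham (p : Fin 6 → ℝ) : ℝ :=
  (1/2) * ((PX p)^2 + (PY p)^2) - (1/(8*Real.pi)) * (Qf p) ^ (-(1/2) : ℝ)

/-- A solution of the Kepler–Heisenberg system: a differentiable curve on an open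
interval (open preconnected set) `I`, whose position component never vanishes, and
which satisfies Hamilton's equations for `Ham`. -/
def IsSolutionOn (c : ℝ → Fin 6 → ℝ) (I : Set ℝ) : Prop :=
  IsOpen I ∧ IsPreconnected I ∧
  ∀ t ∈ I,
    (¬ (c t 0 = 0 ∧ c t 1 = 0 ∧ c t 2 = 0)) ∧
    HasDerivAt (fun τ => c τ 0) (fderiv ℝ Ham (c t) (Pi.single 3 1)) t ∧
    HasDerivAt (fun τ => c τ 1) (fderiv ℝ Ham (c t) (Pi.single 4 1)) t ∧
    HasDerivAt (fun τ => c τ 2) (fderiv ℝ Ham (c t) (Pi.single 5 1)) t ∧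
    HasDerivAt (fun τ => c τ 3) (-(fderiv ℝ Ham (c t) (Pi.single 0 1))) t ∧
    HasDerivAt (fun τ => c τ 4) (-(fderiv ℝ Ham (c t) (Pi.single 1 1))) t ∧
    HasDerivAt (fun τ => c τ 5) (-(fderiv ℝ Ham (c t) (Pi.single 2 1))) t
/-- The Heisenberg dilation `D_λ` on phase space. -/
noncomputable def Dil (l : ℝ) (p : Fin 6 → ℝ) : Fin 6 → ℝ :=
  ![l * p 0, l * p 1, l^2 * p 2, l⁻¹ * p 3, l⁻¹ * p 4, (l^2)⁻¹ * p 5]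

/-- The rotation `R_φ` about the `z`-axis on phase space. -/
noncomputable def Rot (φ : ℝ) (p : Fin 6 → ℝ) : Fin 6 → ℝ :=
  ![p 0 * Real.cos φ - p 1 * Real.sin φ, p 0 * Real.sin φ + p 1 * Real.cos φ, p 2,
    p 3 * Real.cos φ - p 4 * Real.sin φ, p 3 * Real.sin φ + p 4 * Real.cos φ, p 5]


noncomputable def gradH (p : Fin 6 → ℝ) : Fin 6 → ℝ :=
  ![PY p * ((1/2) * p 5) + (1/(16*Real.pi)) * (Qf p) ^ (-(1/2) - 1 : ℝ) * (4 * p 0 * ((p 0)^2 + (p 1)^2)),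
    PX p * (-((1/2) * p 5)) + (1/(16*Real.pi)) * (Qf p) ^ (-(1/2) - 1 : ℝ) * (4 * p 1 * ((p 0)^2 + (p 1)^2)),
    (2/Real.pi) * (Qf p) ^ (-(1/2) - 1 : ℝ) * p 2,
    PX p,
    PY p,
    PX p * (-((1/2) * p 1)) + PY p * ((1/2) * p 0)]


lemma gradH0 (p : Fin 6 → ℝ) : gradH p 0 = PY p * ((1/2) * p 5) + (1/(16*Real.pi)) * (Qf p) ^ (-(1/2) - 1 : ℝ) * (4 * p 0 * ((p 0)^2 + (p 1)^2)) := rfl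
lemma gradH1 (p : Fin 6 → ℝ) : gradH p 1 = PX p * (-((1/2) * p 5)) + (1/(16*Real.pi)) * (Qf p) ^ (-(1/2) - 1 : ℝ) * (4 * p 1 * ((p 0)^2 + (p 1)^2)) := rfl
lemma gradH2 (p : Fin 6 → ℝ) : gradH p 2 = (2/Real.pi) * (Qf p) ^ (-(1/2) - 1 : ℝ) * p 2 := rfl
lemma gradH3 (p : Fin 6 → ℝ) : gradH p 3 = PX p := rfl
lemma gradH4 (p : Fin 6 → ℝ) : gradH p 4 = PY p := rfl
lemma gradH5 (p : Fin 6 → ℝ) : gradH p 5 = PX p * (-((1/2) * p 1)) + PY p * ((1/2) * p 0) := rfl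

noncomputable def gradCLM (g : Fin 6 → ℝ) : (Fin 6 → ℝ) →L[ℝ] ℝ :=
  ∑ i, g i • ContinuousLinearMap.proj i

lemma Qf_nonneg (p : Fin 6 → ℝ) : 0 ≤ Qf p := by unfold Qf; positivity

lemma hamHasFDerivAt (p : Fin 6 → ℝ) (hp : 0 < Qf p) :
    HasFDerivAt Ham (gradCLM (gradH p)) p := by
  have h0 : HasFDerivAt (fun q : Fin 6 → ℝ => q 0)
      (ContinuousLinearMap.proj (R := ℝ) (φ := fun _ : Fin 6 => ℝ) 0) p :=
    hasFDerivAt_apply 0 p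
  have h1 : HasFDerivAt (fun q : Fin 6 → ℝ => q 1)
      (ContinuousLinearMap.proj (R := ℝ) (φ := fun _ : Fin 6 => ℝ) 1) p :=
    hasFDerivAt_apply 1 p
  have h2 : HasFDerivAt (fun q : Fin 6 → ℝ => q 2)
      (ContinuousLinearMap.proj (R := ℝ) (φ := fun _ : Fin 6 => ℝ) 2) p :=
    hasFDerivAt_apply 2 p
  have h3 : HasFDerivAt (fun q : Fin 6 → ℝ => q 3)
      (ContinuousLinearMap.proj (R := ℝ) (φ := fun _ : Fin 6 => ℝ) 3) p :=
    hasFDerivAt_apply 3 p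
  have h4 : HasFDerivAt (fun q : Fin 6 → ℝ => q 4)
      (ContinuousLinearMap.proj (R := ℝ) (φ := fun _ : Fin 6 => ℝ) 4) p :=
    hasFDerivAt_apply 4 p
  have h5 : HasFDerivAt (fun q : Fin 6 → ℝ => q 5)
      (ContinuousLinearMap.proj (R := ℝ) (φ := fun _ : Fin 6 => ℝ) 5) p :=
    hasFDerivAt_apply 5 p
  have hPX := h3.sub ((h1.const_mul (1/2 : ℝ)).mul h5)
  have hPY := h4.add ((h0.const_mul (1/2 : ℝ)).mul h5)
  have hQsub := (h0.mul h0).add (h1.mul h1)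
  have hQ := (hQsub.mul hQsub).add ((h2.mul h2).const_mul (16:ℝ))
  have hQ' : Qf p ≠ 0 := hp.ne'
  have hrpow := (hQ.rpow_const (p := (-(1/2) : ℝ)) (Or.inl (by
    convert hQ' using 1
    simp only [Qf, Pi.mul_apply, Pi.add_apply]; ring)))
  have H := (((hPX.mul hPX).add (hPY.mul hPY)).const_mul (1/2 : ℝ)).sub
      (hrpow.const_mul (1/(8*Real.pi)))
  have hfun : Ham = fun q : Fin 6 → ℝ =>
      (1/2) * ((q 3 - 1/2 * q 1 * q 5) * (q 3 - 1/2 * q 1 * q 5) +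
          (q 4 + 1/2 * q 0 * q 5) * (q 4 + 1/2 * q 0 * q 5)) -
        1/(8*Real.pi) * ((q 0 * q 0 + q 1 * q 1) * (q 0 * q 0 + q 1 * q 1) +
          16 * (q 2 * q 2)) ^ (-(1/2) : ℝ) := by
    funext q; simp only [Ham, PX, PY, Qf]; ring_nf
  rw [hfun]
  refine H.congr_fderiv ?_
  ext v
  simp only [gradCLM, gradH0, gradH1, gradH2, gradH3, gradH4, gradH5, PX, PY, Qf,
    ContinuousLinearMap.sum_apply,
    ContinuousLinearMap.smul_apply, ContinuousLinearMap.add_apply,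
    ContinuousLinearMap.sub_apply, ContinuousLinearMap.proj_apply,
    ContinuousLinearMap.coe_smul', Pi.smul_apply, smul_eq_mul, Fin.sum_univ_six,
    Matrix.cons_val_zero, Matrix.cons_val_one, Matrix.head_cons, Matrix.cons_val_two,
    Matrix.tail_cons, Matrix.cons_val_three, Matrix.cons_val_four, Pi.mul_apply, Pi.add_apply, Pi.sub_apply]
  norm_num
  ring

lemma fderiv_Ham_apply (p : Fin 6 → ℝ) (hp : 0 < Qf p) (i : Fin 6) :
    fderiv ℝ Ham p (Pi.single i 1) = gradH p i := by
  rw [(hamHasFDerivAt p hp).fderiv]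
  fin_cases i <;>
    simp [gradCLM, Fin.sum_univ_six, Pi.single_apply]

noncomputable def Dscale : Fin 6 → (ℝ → ℝ) :=
  ![fun l => (l^3)⁻¹, fun l => (l^3)⁻¹, fun l => (l^4)⁻¹, fun l => l⁻¹, fun l => l⁻¹, fun l => 1]

lemma Dil0 (l : ℝ) (p : Fin 6 → ℝ) : Dil l p 0 = l * p 0 := rfl
lemma Dil1 (l : ℝ) (p : Fin 6 → ℝ) : Dil l p 1 = l * p 1 := rfl
lemma Dil2 (l : ℝ) (p : Fin 6 → ℝ) : Dil l p 2 = l^2 * p 2 := rfl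
lemma Dil3 (l : ℝ) (p : Fin 6 → ℝ) : Dil l p 3 = l⁻¹ * p 3 := rfl
lemma Dil4 (l : ℝ) (p : Fin 6 → ℝ) : Dil l p 4 = l⁻¹ * p 4 := rfl
lemma Dil5 (l : ℝ) (p : Fin 6 → ℝ) : Dil l p 5 = (l^2)⁻¹ * p 5 := rfl

lemma PX_dil (l : ℝ) (hl : l ≠ 0) (p : Fin 6 → ℝ) : PX (Dil l p) = l⁻¹ * PX p := by
  simp only [PX, Dil0, Dil1, Dil2, Dil3, Dil4, Dil5]
  field_simp

lemma PY_dil (l : ℝ) (hl : l ≠ 0) (p : Fin 6 → ℝ) : PY (Dil l p) = l⁻¹ * PY p := by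
  simp only [PY, Dil0, Dil1, Dil2, Dil3, Dil4, Dil5]
  field_simp

lemma Qf_dil (l : ℝ) (p : Fin 6 → ℝ) : Qf (Dil l p) = l^4 * Qf p := by
  simp only [Qf, Dil0, Dil1, Dil2]
  ring

lemma rpow_dil (l : ℝ) (hl : 0 < l) (p : Fin 6 → ℝ) :
    (Qf (Dil l p)) ^ (-(1/2) - 1 : ℝ) = (l^6)⁻¹ * (Qf p) ^ (-(1/2) - 1 : ℝ) := by
  rw [Qf_dil, Real.mul_rpow (by positivity) (Qf_nonneg p)]
  congr 1
  rw [← Real.rpow_natCast l 4, ← Real.rpow_mul hl.le]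
  rw [show ((4:ℕ):ℝ) * (-(1/2) - 1) = -(6:ℕ) by norm_num]
  rw [Real.rpow_neg hl.le, Real.rpow_natCast]


lemma Qf_pos (p : Fin 6 → ℝ) (h : ¬ (p 0 = 0 ∧ p 1 = 0 ∧ p 2 = 0)) : 0 < Qf p := by
  rcases (Qf_nonneg p).lt_or_eq with h' | h'
  · exact h'
  · exfalso
    apply h
    unfold Qf at h'
    have hz2 : (p 2)^2 = 0 := by nlinarith [sq_nonneg ((p 0)^2 + (p 1)^2)]
    have hA : ((p 0)^2 + (p 1)^2)^2 = 0 := by nlinarith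
    have hA' : (p 0)^2 + (p 1)^2 = 0 := pow_eq_zero_iff (by norm_num) |>.mp hA
    have h0 : (p 0)^2 = 0 := by nlinarith [sq_nonneg (p 1)]
    have h1 : (p 1)^2 = 0 := by nlinarith [sq_nonneg (p 0)]
    exact ⟨pow_eq_zero_iff (by norm_num) |>.mp h0,
      pow_eq_zero_iff (by norm_num) |>.mp h1,
      pow_eq_zero_iff (by norm_num) |>.mp hz2⟩

lemma gradH_dil0 (l : ℝ) (hl : 0 < l) (p : Fin 6 → ℝ) :
    gradH (Dil l p) 0 = (l^3)⁻¹ * gradH p 0 := by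
  rw [gradH0, gradH0, PY_dil l hl.ne' p, rpow_dil l hl p, Dil0, Dil1, Dil5]
  field_simp [Real.pi_ne_zero]

lemma gradH_dil1 (l : ℝ) (hl : 0 < l) (p : Fin 6 → ℝ) :
    gradH (Dil l p) 1 = (l^3)⁻¹ * gradH p 1 := by
  rw [gradH1, gradH1, PX_dil l hl.ne' p, rpow_dil l hl p, Dil0, Dil1, Dil5]
  field_simp [Real.pi_ne_zero]

lemma gradH_dil2 (l : ℝ) (hl : 0 < l) (p : Fin 6 → ℝ) :
    gradH (Dil l p) 2 = (l^4)⁻¹ * gradH p 2 := by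
  rw [gradH2, gradH2, rpow_dil l hl p, Dil2]
  field_simp [Real.pi_ne_zero]

lemma gradH_dil3 (l : ℝ) (hl : 0 < l) (p : Fin 6 → ℝ) :
    gradH (Dil l p) 3 = l⁻¹ * gradH p 3 := by
  rw [gradH3, gradH3, PX_dil l hl.ne' p]

lemma gradH_dil4 (l : ℝ) (hl : 0 < l) (p : Fin 6 → ℝ) :
    gradH (Dil l p) 4 = l⁻¹ * gradH p 4 := by
  rw [gradH4, gradH4, PY_dil l hl.ne' p]

lemma gradH_dil5 (l : ℝ) (hl : 0 < l) (p : Fin 6 → ℝ) :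
    gradH (Dil l p) 5 = gradH p 5 := by
  rw [gradH5, gradH5, PX_dil l hl.ne' p, PY_dil l hl.ne' p, Dil0, Dil1]
  field_simp

lemma comp_scale {f : ℝ → ℝ} {d : ℝ} (a : ℝ) (ha : a ≠ 0) {s : ℝ}
    (hf : HasDerivAt f d s) (k : ℝ) :
    HasDerivAt (fun τ => k * f (τ / a)) (k * (d * (1/a))) (a * s) := by
  have h1 : HasDerivAt (fun τ : ℝ => τ / a) (1/a) (a*s) := (hasDerivAt_id _).div_const a
  have hf' : HasDerivAt f d (a*s/a) := by rw [mul_div_cancel_left₀ _ ha]; exact hf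
  have h2 := (hf'.comp (a*s) h1).const_mul k
  simpa only [Function.comp_def] using h2

/-- Heisenberg dilations map solutions to solutions after a quadratic time rescaling:
if `c` is a solution on `I` and `λ > 0`, then `t ↦ D_λ(c(t/λ²))` is a solution on the
rescaled interval `λ² • I`. -/
theorem kh_dilation_of_solution (c : ℝ → Fin 6 → ℝ) (I : Set ℝ)
    (hc : IsSolutionOn c I) (l : ℝ) (hl : 0 < l) :
    IsSolutionOn (fun t => Dil l (c (t / l^2))) ((fun t => l^2 * t) '' I) := by
  obtain ⟨hIopen, hIconn, hI⟩ := hc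
  have hl2 : (l:ℝ)^2 ≠ 0 := by positivity
  have himg : (fun t => l^2 * t) '' I = (fun t : ℝ => t / l^2) ⁻¹' I := by
    ext t
    constructor
    · rintro ⟨s, hs, rfl⟩
      simpa [mul_div_cancel_left₀ _ hl2] using hs
    · intro ht
      exact ⟨t / l^2, ht, by field_simp⟩
  refine ⟨?_, ?_, ?_⟩
  · rw [himg]; exact hIopen.preimage (continuous_id.div_const _)
  · exact hIconn.image _ (Continuous.continuousOn (by continuity))
  · rintro t ⟨s, hs, rfl⟩
    have hcan : l^2 * s / l^2 = s := mul_div_cancel_left₀ _ hl2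
    obtain ⟨hnz, hd0, hd1, hd2, hd3, hd4, hd5⟩ := hI s hs
    have hq : 0 < Qf (c s) := Qf_pos _ hnz
    have hqD : 0 < Qf (Dil l (c s)) := by
      rw [Qf_dil]; exact mul_pos (by positivity) hq
    simp only [hcan]
    refine ⟨?_, ?_, ?_, ?_, ?_, ?_, ?_⟩
    · rintro ⟨a0, a1, a2⟩
      apply hnz
      rw [Dil0] at a0; rw [Dil1] at a1; rw [Dil2] at a2
      refine ⟨?_, ?_, ?_⟩
      · rcases mul_eq_zero.mp a0 with h | h
        · exact absurd h hl.ne'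
        · exact h
      · rcases mul_eq_zero.mp a1 with h | h
        · exact absurd h hl.ne'
        · exact h
      · rcases mul_eq_zero.mp a2 with h | h
        · exact absurd h hl2
        · exact h
    · have key : fderiv ℝ Ham (Dil l (c s)) (Pi.single 3 1) =
          l * ((fderiv ℝ Ham (c s) (Pi.single 3 1)) * (1/l^2)) := by
        rw [fderiv_Ham_apply _ hqD, fderiv_Ham_apply _ hq, gradH_dil3 l hl]
        field_simp
      rw [key]
      exact comp_scale _ hl2 hd0 l
    · have key : fderiv ℝ Ham (Dil l (c s)) (Pi.single 4 1) =
          l * ((fderiv ℝ Ham (c s) (Pi.single 4 1)) * (1/l^2)) := by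
        rw [fderiv_Ham_apply _ hqD, fderiv_Ham_apply _ hq, gradH_dil4 l hl]
        field_simp
      rw [key]
      exact comp_scale _ hl2 hd1 l
    · have key : fderiv ℝ Ham (Dil l (c s)) (Pi.single 5 1) =
          l^2 * ((fderiv ℝ Ham (c s) (Pi.single 5 1)) * (1/l^2)) := by
        rw [fderiv_Ham_apply _ hqD, fderiv_Ham_apply _ hq, gradH_dil5 l hl]
        field_simp
      rw [key]
      exact comp_scale _ hl2 hd2 (l^2)
    · have key : -(fderiv ℝ Ham (Dil l (c s)) (Pi.single 0 1)) =
          l⁻¹ * ((-(fderiv ℝ Ham (c s) (Pi.single 0 1))) * (1/l^2)) := by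
        rw [fderiv_Ham_apply _ hqD, fderiv_Ham_apply _ hq, gradH_dil0 l hl]
        field_simp
      rw [key]
      exact comp_scale _ hl2 hd3 l⁻¹
    · have key : -(fderiv ℝ Ham (Dil l (c s)) (Pi.single 1 1)) =
          l⁻¹ * ((-(fderiv ℝ Ham (c s) (Pi.single 1 1))) * (1/l^2)) := by
        rw [fderiv_Ham_apply _ hqD, fderiv_Ham_apply _ hq, gradH_dil1 l hl]
        field_simp
      rw [key]
      exact comp_scale _ hl2 hd4 l⁻¹
    · have key : -(fderiv ℝ Ham (Dil l (c s)) (Pi.single 2 1)) =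
          (l^2)⁻¹ * ((-(fderiv ℝ Ham (c s) (Pi.single 2 1))) * (1/l^2)) := by
        rw [fderiv_Ham_apply _ hqD, fderiv_Ham_apply _ hq, gradH_dil2 l hl]
        field_simp
      rw [key]
      exact comp_scale _ hl2 hd5 (l^2)⁻¹
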